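/- arXiv:1810.03204 — 3 statements merged into one kernel-verified Lean document; each statement's English description precedes it below -/
import Mathlib

section
/- Let n ≥ 3, let V be an n-dimensional real vector space with a nondegenerate symmetric bilinear form g of Lorentzian signature (−,+,…,+), and let u ∈ V satisfy g(u,u) = −1. If v ∈ V and there exist real numbers a, b such that g(v,x)g(v,y) = a·g(x,y) + b·g(u,x)g(u,y) for all x, y ∈ V, then v = λu for some λ ∈ ℝ (and consequently a = 0 and b = λ²). -/
noncomputable section
open scoped BigOperators

namespace GRWAlg

variable {V : Type*} [AddCommGroup V] [Module ℝ V] {n : ℕ}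

/-- `e` is a (pseudo-)orthonormal basis realizing the Lorentzian signature (−,+,…,+). -/
def IsLorentzBasis (g : V →ₗ[ℝ] V →ₗ[ℝ] ℝ) (e : Module.Basis (Fin n) ℝ V) : Prop :=
  ∀ i j, g (e i) (e j) = if i = j then (if (i : ℕ) = 0 then (-1 : ℝ) else 1) else 0

/-- Algebraic step for condition C1: if `g(v,x)g(v,y) = a g(x,y) + b u_x u_y`
for all `x, y`, then `v` is parallel to the unit timelike vector `u`,
and consequently `a = 0`, `b = λ²`. -/
theorem stmt0 (hn : 3 ≤ n) [FiniteDimensional ℝ V] (hdim : Module.finrank ℝ V = n)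
    (g : V →ₗ[ℝ] V →ₗ[ℝ] ℝ)
    (hg_symm : ∀ x y : V, g x y = g y x)
    (hg_nondeg : ∀ x : V, (∀ y : V, g x y = 0) → x = 0)
    (e : Module.Basis (Fin n) ℝ V) (he : IsLorentzBasis g e)
    (u : V) (hu : g u u = -1)
    (v : V) (a b : ℝ)
    (hv : ∀ x y : V, g v x * g v y = a * g x y + b * g u x * g u y) :
    ∃ l : ℝ, v = l • u ∧ a = 0 ∧ b = l ^ 2 := by
  have hn0 : (0 : ℕ) < n := by omega
  have hn1 : (1 : ℕ) < n := by omega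
  have hn2 : (2 : ℕ) < n := by omega
  set i0 : Fin n := ⟨0, hn0⟩ with hi0
  set i1 : Fin n := ⟨1, hn1⟩ with hi1
  set i2 : Fin n := ⟨2, hn2⟩ with hi2
  have g00 : g (e i0) (e i0) = -1 := by rw [he i0 i0]; simp [hi0]
  have g11 : g (e i1) (e i1) = 1 := by rw [he i1 i1]; simp [hi1]
  have g22 : g (e i2) (e i2) = 1 := by rw [he i2 i2]; simp [hi2]
  have g01 : g (e i0) (e i1) = 0 := by rw [he i0 i1]; simp [hi0, hi1, Fin.ext_iff]
  have g02 : g (e i0) (e i2) = 0 := by rw [he i0 i2]; simp [hi0, hi2, Fin.ext_iff]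
  have g12 : g (e i1) (e i2) = 0 := by rw [he i1 i2]; simp [hi1, hi2, Fin.ext_iff]
  set A := g v (e i0) with hA
  set B := g v (e i1) with hB
  set C := g v (e i2) with hC
  set P := g u (e i0) with hP
  set Q := g u (e i1) with hQ
  set R := g u (e i2) with hR
  have E00 : A * A = -a + b * P * P := by
    have := hv (e i0) (e i0); rw [g00] at this; linarith
  have E11 : B * B = a + b * Q * Q := by
    have := hv (e i1) (e i1); rw [g11] at this; linarith
  have E22 : C * C = a + b * R * R := by
    have := hv (e i2) (e i2); rw [g22] at this; linarith
  have E01 : A * B = b * P * Q := by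
    have := hv (e i0) (e i1); rw [g01] at this; linarith
  have E02 : A * C = b * P * R := by
    have := hv (e i0) (e i2); rw [g02] at this; linarith
  have E12 : B * C = b * Q * R := by
    have := hv (e i1) (e i2); rw [g12] at this; linarith
  -- I : a² + ab(Q²+R²) = 0
  have hI : a^2 + a*b*(Q^2 + R^2) = 0 := by
    linear_combination (B*C + b*Q*R) * E12 - C^2 * E11 - (a + b*Q^2) * E22
  -- II : a² - abP² + abQ² = 0
  have hII : a^2 - a*b*P^2 + a*b*Q^2 = 0 := by
    linear_combination (-(A*B) - b*P*Q) * E01 + B^2 * E00 + (-a + b*P^2) * E11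
  have hIII : a^2 - a*b*P^2 + a*b*R^2 = 0 := by
    linear_combination (-(A*C) - b*P*R) * E02 + C^2 * E00 + (-a + b*P^2) * E22
  -- V : abPR = 0   and   VI : abPQ = 0
  have hV : a*b*P*R = 0 := by
    linear_combination (B*C)*E01 + (b*P*Q)*E12 - (A*C)*E11 - (a + b*Q^2)*E02
  have hVI : a*b*P*Q = 0 := by
    linear_combination (B*C)*E02 + (b*P*R)*E12 - (A*B)*E22 - (a + b*R^2)*E01
  -- a² = 2abP²
  have hPeq : a^2 - 2*a*b*P^2 = 0 := by linear_combination hII + hIII - hI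
  have ha3 : a^3 = 0 := by
    linear_combination a * hPeq + 2*b*P^2 * hI - 2*b*P*Q * hVI - 2*b*P*R * hV
  have ha : a = 0 := pow_eq_zero_iff (n := 3) (by norm_num) |>.mp ha3
  set c := g v u with hc
  have hb : b = c^2 := by
    have h := hv u u; rw [hu, ha] at h; linear_combination -h
  by_cases hc0 : c = 0
  · have hb0 : b = 0 := by rw [hb, hc0]; norm_num
    have hv0 : v = 0 := by
      apply hg_nondeg
      intro y
      have h2 := hv y y
      rw [ha, hb0] at h2
      have : g v y * g v y = 0 := by linarith
      exact mul_self_eq_zero.mp this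
    exact ⟨0, by simp [hv0], ha, by simp [hb, hc0]⟩
  · refine ⟨-c, ?_, ha, by rw [hb]; ring⟩
    have key : ∀ y, g (v + c • u) y = 0 := by
      intro y
      have h1 := hv u y
      rw [ha, hu, hb] at h1
      -- h1 : c * g v y = 0 * g u y + c^2 * (-1) * g u y
      have h2 : g v y = -c * g u y := by
        apply mul_left_cancel₀ hc0
        rw [← hc] at h1
        linarith
      simp only [map_add, map_smul, LinearMap.add_apply, LinearMap.smul_apply,
        smul_eq_mul, h2]
      ring
    have h0 : v + c • u = 0 := hg_nondeg _ key
    have := eq_neg_of_add_eq_zero_left h0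
    rw [this, ← neg_smul]
end GRWAlg
end
end

section
/- Let V be a real vector space of finite dimension n ≥ 3 with a nondegenerate symmetric bilinear form g of Lorentzian signature (−,+,…,+), and let u ∈ V satisfy g(u,u) = −1. Let C : V×V×V×V → ℝ be multilinear and antisymmetric in its first two arguments, C(x,y,z,w) = −C(y,x,z,w). Assume u is Weyl-compatible with C, i.e. g(u,x)C(y,z,w,u) + g(u,y)C(z,x,w,u) + g(u,z)C(x,y,w,u) = 0 for all x, y, z, w ∈ V. Then C(u,y,z,u) = 0 for all y, z ∈ V if and only if C(x,y,z,u) = 0 for all x, y, z ∈ V. -/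
noncomputable section
open scoped BigOperators

namespace GRWAlg

variable {V : Type*} [AddCommGroup V] [Module ℝ V] {n : ℕ}

/-- Weyl-compatibility implies: `C(u,y,z,u) = 0` for all `y,z` iff
`C(x,y,z,u) = 0` for all `x,y,z`. -/
theorem stmt1 (hn : 3 ≤ n) [FiniteDimensional ℝ V] (hdim : Module.finrank ℝ V = n)
    (g : V →ₗ[ℝ] V →ₗ[ℝ] ℝ)
    (hg_symm : ∀ x y : V, g x y = g y x)
    (hg_nondeg : ∀ x : V, (∀ y : V, g x y = 0) → x = 0)
    (e : Module.Basis (Fin n) ℝ V) (he : IsLorentzBasis g e)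
    (u : V) (hu : g u u = -1)
    (C : V →ₗ[ℝ] V →ₗ[ℝ] V →ₗ[ℝ] V →ₗ[ℝ] ℝ)
    (hanti : ∀ x y z w : V, C x y z w = - C y x z w)
    (hcomp : ∀ x y z w : V,
        g u x * C y z w u + g u y * C z x w u + g u z * C x y w u = 0) :
    (∀ y z : V, C u y z u = 0) ↔ (∀ x y z : V, C x y z u = 0) := by
  constructor
  · intro h x y z
    have hc := hcomp u x y z
    rw [hu, hanti y u, h y z, h x z] at hc
    linarith
  · intro h y z; exact h u y z
end GRWAlg
end
end

section
/- Let V be a real vector space of finite dimension n ≥ 3 with a nondegenerate symmetric bilinear form g of Lorentzian signature (−,+,…,+), and let u ∈ V satisfy g(u,u) = −1. Let K : V×V×V×V → ℝ be multilinear with the Riemann symmetries K(x,y,z,w) = −K(y,x,z,w) = −K(x,y,w,z) = K(z,w,x,y). Define Ric(y,z) = Σ_{j,m} g^{jm} K(e_j, y, z, e_m), scal = Σ_{k,l} g^{kl} Ric(e_k,e_l), and the Weyl-type tensor C(x,y,z,w) = K(x,y,z,w) + [g(x,w)Ric(y,z) − g(y,w)Ric(x,z) + Ric(x,w)g(y,z)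 − Ric(y,w)g(x,z)]/(n−2) − scal·[g(x,w)g(y,z) − g(y,w)g(x,z)]/((n−1)(n−2)). If u is Riemann-compatible, i.e. g(u,x)K(y,z,w,u) + g(u,y)K(z,x,w,u) + g(u,z)K(x,y,w,u) = 0 for all x, y, z, w ∈ V, then u is an eigenvector of Ric (there is ξ ∈ ℝ with Ric(u,y) = ξ·g(u,y) for all y) and u is Weyl-compatible: g(u,x)C(y,z,w,u) + g(u,y)C(z,x,w,u) + g(u,z)C(x,y,w,u) = 0 for all x, y, z, w ∈ V. -/
noncomputable section
open scoped BigOperators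

namespace GRWAlg

variable {V : Type*} [AddCommGroup V] [Module ℝ V] {n : ℕ}

/-- Inverse Gram matrix `(g^{jm})` of `g` in the basis `e`. -/
def gramInv (g : V →ₗ[ℝ] V →ₗ[ℝ] ℝ) (e : Module.Basis (Fin n) ℝ V) :
    Matrix (Fin n) (Fin n) ℝ :=
  (Matrix.of fun i j => g (e i) (e j))⁻¹

/-- Ricci contraction `Ric(y,z) = g^{jm} K(e_j, y, z, e_m)`. -/
def ricOf (g : V →ₗ[ℝ] V →ₗ[ℝ] ℝ) (e : Module.Basis (Fin n) ℝ V)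
    (K : V →ₗ[ℝ] V →ₗ[ℝ] V →ₗ[ℝ] V →ₗ[ℝ] ℝ) (y z : V) : ℝ :=
  ∑ j, ∑ m, gramInv g e j m * K (e j) y z (e m)

/-- Scalar contraction `scal = g^{kl} Ric(e_k, e_l)`. -/
def scalOf (g : V →ₗ[ℝ] V →ₗ[ℝ] ℝ) (e : Module.Basis (Fin n) ℝ V)
    (K : V →ₗ[ℝ] V →ₗ[ℝ] V →ₗ[ℝ] V →ₗ[ℝ] ℝ) : ℝ :=
  ∑ k, ∑ l, gramInv g e k l * ricOf g e K (e k) (e l)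

/-- Weyl-type tensor of `K` (trace-free part of the curvature decomposition). -/
def weylOf (g : V →ₗ[ℝ] V →ₗ[ℝ] ℝ) (e : Module.Basis (Fin n) ℝ V)
    (K : V →ₗ[ℝ] V →ₗ[ℝ] V →ₗ[ℝ] V →ₗ[ℝ] ℝ) (x y z w : V) : ℝ :=
  K x y z w
    + (g x w * ricOf g e K y z - g y w * ricOf g e K x z
        + ricOf g e K x w * g y z - ricOf g e K y w * g x z) / ((n : ℝ) - 2)
    - scalOf g e K * (g x w * g y z - g y w * g x z) / (((n : ℝ) - 1) * ((n : ℝ) - 2))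

/-- Riemann-compatibility implies that `u` is a Ricci eigenvector and that `u` is
Weyl-compatible (eqs. (18)–(19) of the paper). -/
theorem stmt2 (hn : 3 ≤ n) [FiniteDimensional ℝ V] (hdim : Module.finrank ℝ V = n)
    (g : V →ₗ[ℝ] V →ₗ[ℝ] ℝ)
    (hg_symm : ∀ x y : V, g x y = g y x)
    (hg_nondeg : ∀ x : V, (∀ y : V, g x y = 0) → x = 0)
    (e : Module.Basis (Fin n) ℝ V) (he : IsLorentzBasis g e)
    (u : V) (hu : g u u = -1)
    (K : V →ₗ[ℝ] V →ₗ[ℝ] V →ₗ[ℝ] V →ₗ[ℝ] ℝ)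
    (hK1 : ∀ x y z w : V, K x y z w = - K y x z w)
    (hK2 : ∀ x y z w : V, K x y z w = - K x y w z)
    (hK3 : ∀ x y z w : V, K x y z w = K z w x y)
    (hRcomp : ∀ x y z w : V,
        g u x * K y z w u + g u y * K z x w u + g u z * K x y w u = 0) :
    (∃ ξ : ℝ, ∀ y : V, ricOf g e K u y = ξ * g u y)
    ∧ (∀ x y z w : V,
        g u x * weylOf g e K y z w u + g u y * weylOf g e K z x w u
          + g u z * weylOf g e K x y w u = 0) := by
  classical
  set η : Fin n → ℝ := (fun i => if (i : ℕ) = 0 then (-1 : ℝ) else 1) with hηdef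
  have hη2 : ∀ i, η i * η i = 1 := by
    intro i; simp only [hηdef]; split <;> norm_num
  have hgram : gramInv g e = Matrix.diagonal η := by
    have h1 : (Matrix.of fun i j => g (e i) (e j)) = Matrix.diagonal η := by
      ext i j
      rw [Matrix.of_apply, he i j, Matrix.diagonal_apply]
    unfold gramInv
    rw [h1]
    apply Matrix.inv_eq_right_inv
    rw [Matrix.diagonal_mul_diagonal]
    ext i j
    by_cases h : i = j
    · subst h; simp [Matrix.diagonal_apply_eq, hη2 i, Matrix.one_apply_eq]
    · simp [Matrix.diagonal_apply_ne _ h, Matrix.one_apply_ne h]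
  have hric : ∀ y z : V, ricOf g e K y z = ∑ j, η j * K (e j) y z (e j) := by
    intro y z
    unfold ricOf
    rw [hgram]
    refine Finset.sum_congr rfl fun j _ => ?_
    rw [Finset.sum_eq_single j]
    · rw [Matrix.diagonal_apply_eq]
    · intro m _ hm
      rw [Matrix.diagonal_apply_ne _ (Ne.symm hm), zero_mul]
    · intro h; exact absurd (Finset.mem_univ j) h
  have hsym : ∀ y z : V, ricOf g e K y z = ricOf g e K z y := by
    intro y z
    rw [hric, hric]
    refine Finset.sum_congr rfl fun j _ => ?_
    have : K (e j) y z (e j) = K (e j) z y (e j) := by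
      rw [hK3 (e j) y z (e j), hK1 z (e j) (e j) y, hK2 (e j) z (e j) y, neg_neg]
    rw [this]
  have hgu : ∀ j, g u (e j) = e.repr u j * η j := by
    intro j
    conv_lhs => rw [← e.sum_repr u]
    rw [map_sum, LinearMap.sum_apply]
    rw [Finset.sum_eq_single j]
    · rw [map_smul, LinearMap.smul_apply, smul_eq_mul, he j j]
      simp [hηdef]
    · intro i _ hi
      rw [map_smul, LinearMap.smul_apply, smul_eq_mul, he i j, if_neg hi, mul_zero]
    · intro h; exact absurd (Finset.mem_univ j) h
  have key : ∀ y z : V, g u y * ricOf g e K u z = g u z * ricOf g e K u y := by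
    intro y z
    have h0 : ∑ j, η j * (g u (e j) * K y z (e j) u + g u y * K z (e j) (e j) u
        + g u z * K (e j) y (e j) u) = 0 := by
      simp [hRcomp]
    have hS1 : (∑ j, η j * (g u (e j) * K y z (e j) u)) = 0 := by
      have e1 : (∑ j, η j * (g u (e j) * K y z (e j) u))
          = ∑ j, e.repr u j * K y z (e j) u := by
        refine Finset.sum_congr rfl fun j _ => ?_
        rw [hgu j]
        linear_combination (e.repr u j * K y z (e j) u) * hη2 j
      have e2 : K y z (∑ j, e.repr u j • e j) u = ∑ j, e.repr u j * K y z (e j) u := by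
        rw [map_sum, LinearMap.sum_apply]
        refine Finset.sum_congr rfl fun j _ => ?_
        rw [map_smul, LinearMap.smul_apply, smul_eq_mul]
      rw [e.sum_repr u] at e2
      have e3 : K y z u u = 0 := by
        have := hK2 y z u u; linarith
      rw [e1, ← e2, e3]
    have hS2 : (∑ j, η j * (g u y * K z (e j) (e j) u)) = g u y * ricOf g e K u z := by
      rw [hric, Finset.mul_sum]
      refine Finset.sum_congr rfl fun j _ => ?_
      rw [hK3 z (e j) (e j) u]
      ring
    have hS3 : (∑ j, η j * (g u z * K (e j) y (e j) u)) = - (g u z * ricOf g e K u y) := by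
      rw [hsym u y, hric, Finset.mul_sum, ← Finset.sum_neg_distrib]
      refine Finset.sum_congr rfl fun j _ => ?_
      rw [hK2 (e j) y (e j) u]
      ring
    have hsplit : (∑ j, η j * (g u (e j) * K y z (e j) u))
        + (∑ j, η j * (g u y * K z (e j) (e j) u))
        + (∑ j, η j * (g u z * K (e j) y (e j) u)) = 0 := by
      rw [← Finset.sum_add_distrib, ← Finset.sum_add_distrib, ← h0]
      refine Finset.sum_congr rfl fun j _ => ?_
      ring
    rw [hS1, hS2, hS3] at hsplit
    linarith
  have hξ : ∀ v : V, ricOf g e K u v = (- ricOf g e K u u) * g u v := by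
    intro v
    have h := key v u
    rw [hu] at h
    linear_combination h
  refine ⟨⟨- ricOf g e K u u, hξ⟩, ?_⟩
  intro x y z w
  have hxu : ricOf g e K x u = (- ricOf g e K u u) * g u x := (hsym x u).trans (hξ x)
  have hyu : ricOf g e K y u = (- ricOf g e K u u) * g u y := (hsym y u).trans (hξ y)
  have hzu : ricOf g e K z u = (- ricOf g e K u u) * g u z := (hsym z u).trans (hξ z)
  simp only [weylOf]
  rw [hxu, hyu, hzu, hg_symm x u, hg_symm y u, hg_symm z u]
  linear_combination hRcomp x y z w
end GRWAlg
end
end
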